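/- Let ≤ be a monomial well-order on FreeMagma E and let I be a two-sided ideal of A. Then the composite of the inclusion Span_ℚ(O(I)) ↪ A with the quotient map A → A/I is an isomorphism of ℚ-vector spaces; in particular A/I is linearly isomorphic to Span_ℚ(O(I)). -/

import Mathlib

/-- The monomial corresponding to an element of the free magma, inside the free
non-unital non-associative algebra. -/
noncomputable def magmaMonomial {E : Type*} (z : FreeMagma E) :
    FreeNonUnitalNonAssocAlgebra ℚ E :=
  MonoidAlgebra.single z (1 : ℚ)

/-- A ℚ-submodule of the magma algebra which is stable under left and right
multiplication by arbitrary elements: a two-sided ideal. -/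
def IsTwoSidedIdealSubmodule {E : Type*}
    (I : Submodule ℚ (FreeNonUnitalNonAssocAlgebra ℚ E)) : Prop :=
  ∀ a x : FreeNonUnitalNonAssocAlgebra ℚ E, x ∈ I → a * x ∈ I ∧ x * a ∈ I

/-- The maximal term `T f` of a nonzero element `f` of the magma algebra: the largest
monomial in its support, with respect to a given linear order on the free magma. -/
noncomputable def maxTerm {E : Type*} [LinearOrder (FreeMagma E)]
    (f : FreeNonUnitalNonAssocAlgebra ℚ E) (hf : f ≠ 0) : FreeMagma E :=
  f.coeff.support.max'
    (Finsupp.support_nonempty_iff.mpr (fun h => hf (MonoidAlgebra.coeff_eq_zero.mp h)))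

/-- `T I`: the set of maximal terms of nonzero elements of `I`. -/
def maxTermSet {E : Type*} [LinearOrder (FreeMagma E)]
    (I : Submodule ℚ (FreeNonUnitalNonAssocAlgebra ℚ E)) : Set (FreeMagma E) :=
  {z | ∃ (f : FreeNonUnitalNonAssocAlgebra ℚ E) (hf : f ≠ 0), f ∈ I ∧ maxTerm f hf = z}

/-- `O I`: the complement of `T I` in the free magma. -/
def outTermSet {E : Type*} [LinearOrder (FreeMagma E)]
    (I : Submodule ℚ (FreeNonUnitalNonAssocAlgebra ℚ E)) : Set (FreeMagma E) :=
  (maxTermSet I)ᶜ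

/-- For a monomial well-order on the free magma and a two-sided ideal `I` of the magma
algebra `A`, the composite of the inclusion of the span of the monomials in `O(I)` with
the quotient map `A → A/I` is a linear isomorphism; in particular `A/I` is linearly
isomorphic to `Span(O(I))`. -/
theorem span_outTerms_linearEquiv_quotient (E : Type*) [LinearOrder (FreeMagma E)]
    (hmono : ∀ x y z : FreeMagma E, x < y → x * z < y * z ∧ z * x < z * y)
    (hwell : ∀ S : Set (FreeMagma E), S.Nonempty → ∃ m ∈ S, ∀ x ∈ S, m ≤ x)
    (I : Submodule ℚ (FreeNonUnitalNonAssocAlgebra ℚ E))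
    (hI : IsTwoSidedIdealSubmodule I) :
    Function.Bijective
      (I.mkQ.comp (Submodule.span ℚ (magmaMonomial '' outTermSet I)).subtype) := by
  classical
  set A := FreeNonUnitalNonAssocAlgebra ℚ E with hA
  set sp : Submodule ℚ A := Submodule.span ℚ (magmaMonomial '' outTermSet I) with hsp
  -- span is the supported submodule
  have hspan : sp = (Finsupp.supported ℚ ℚ (outTermSet I)).map
      ((MonoidAlgebra.coeffLinearEquiv (M := FreeMagma E) (S := ℚ) ℚ).symm.toLinearMap :
        (FreeMagma E →₀ ℚ) →ₗ[ℚ] A) := by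
    rw [hsp, Finsupp.supported_eq_span_single, Submodule.map_span, ← Set.image_comp]
    rfl
  -- basic facts about maxTerm
  have hmem : ∀ (f : A) (hf : f ≠ 0), maxTerm f hf ∈ f.coeff.support := fun f hf =>
    Finset.max'_mem _ _
  have hle : ∀ (f : A) (hf : f ≠ 0), ∀ a ∈ f.coeff.support, a ≤ maxTerm f hf := fun f hf a ha =>
    Finset.le_max' _ a ha
  -- Finsupp arithmetic helpers (stated on Finsupp, used by defeq)
  have happ : ∀ (f g : A) (z : FreeMagma E) (c : ℚ),
      (f - c • g).coeff z = f.coeff z - c * g.coeff z := by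
    intro f g z c; show (f.coeff - c • g.coeff) z = _; simp
  have hsupp : ∀ (f g : A) (c : ℚ),
      (f - c • g).coeff.support ⊆ f.coeff.support ∪ g.coeff.support := fun f g c =>
    (Finsupp.support_sub).trans (Finset.union_subset_union le_rfl Finsupp.support_smul)
  have hsing : ∀ (z : FreeMagma E), (magmaMonomial z).coeff.support ⊆ {z} :=
    fun z => Finsupp.support_single_subset
  have hsingz : ∀ (z : FreeMagma E), (magmaMonomial z).coeff z = 1 :=
    fun z => Finsupp.single_eq_same
  -- well-foundedness of <
  have hwf : WellFounded ((· < ·) : FreeMagma E → FreeMagma E → Prop) :=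
    WellFounded.wellFounded_iff_has_min.mpr fun s hs => by
      obtain ⟨m, hm, h⟩ := hwell s hs
      exact ⟨m, hm, fun x hx => not_lt.mpr (h x hx)⟩
  set K : Submodule ℚ A := sp ⊔ I with hK
  -- key: everything is in sp ⊔ I
  have key : ∀ z : FreeMagma E, ∀ f : A, (∀ a ∈ f.coeff.support, a ≤ z) → f ∈ K := by
    intro z
    induction z using hwf.induction with
    | _ z IH =>
      -- first: elements with support strictly below z
      have step0 : ∀ f : A, (∀ a ∈ f.coeff.support, a ≤ z) → f.coeff z = 0 → f ∈ K := by
        intro f hfz hf0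
        by_cases hf : f = 0
        · simp [hf]
        · have hmlt : maxTerm f hf < z := by
            refine lt_of_le_of_ne (hfz _ (hmem f hf)) ?_
            intro h
            have := hmem f hf
            rw [h] at this
            exact (Finsupp.mem_support_iff.mp this) hf0
          exact IH _ hmlt f (hle f hf)
      intro f hfz
      by_cases hfzz : f.coeff z = 0
      · exact step0 f hfz hfzz
      by_cases hz : z ∈ maxTermSet I
      · obtain ⟨g, hg, hgI, hgz⟩ := hz
        have hgsz : g.coeff z ≠ 0 := by
          have := hmem g hg
          rw [hgz] at this
          exact Finsupp.mem_support_iff.mp this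
        set c : ℚ := f.coeff z * (g.coeff z)⁻¹ with hc
        have h1 : (f - c • g) ∈ K := by
          refine step0 _ ?_ ?_
          · intro a ha
            rcases Finset.mem_union.mp (hsupp f g c ha) with h | h
            · exact hfz a h
            · rw [← hgz]; exact hle g hg a h
          · rw [happ f g z c, hc]
            field_simp
            ring
        rw [(sub_add_cancel f (c • g)).symm]
        exact K.add_mem h1 (K.smul_mem c (le_sup_right (α := Submodule ℚ A) hgI))
      · -- z ∈ outTermSet I
        set c : ℚ := f.coeff z with hc
        have hmono_mem : magmaMonomial z ∈ K := by
          refine le_sup_left (α := Submodule ℚ A) (Submodule.subset_span ?_)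
          exact ⟨z, hz, rfl⟩
        have h1 : (f - c • magmaMonomial z) ∈ K := by
          refine step0 _ ?_ ?_
          · intro a ha
            rcases Finset.mem_union.mp (hsupp f (magmaMonomial z) c ha) with h | h
            · exact hfz a h
            · have := hsing z h
              simp only [Finset.mem_singleton] at this
              exact this ▸ le_rfl
          · rw [happ f (magmaMonomial z) z c, hsingz z]
            ring
        rw [(sub_add_cancel f (c • magmaMonomial z)).symm]
        exact K.add_mem h1 (K.smul_mem c hmono_mem)
  have htop : K = ⊤ := by
    rw [eq_top_iff]
    intro f _
    by_cases hf : f = 0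
    · simp [hf]
    · exact key (maxTerm f hf) f (hle f hf)
  constructor
  · -- injectivity
    intro x y hxy
    simp only [LinearMap.coe_comp, Function.comp_apply, Submodule.coe_subtype] at hxy
    simp only [Submodule.mkQ_apply] at hxy
    have hmem' : (x : A) - (y : A) ∈ I := (Submodule.Quotient.eq I).mp hxy
    have hsub : (x : A) - (y : A) ∈ sp := sp.sub_mem x.2 y.2
    have hsub' : ((x : A) - (y : A)).coeff ∈ Finsupp.supported ℚ ℚ (outTermSet I) := by
      obtain ⟨w, hw, hwe⟩ := (le_of_eq hspan) hsub; rw [← hwe]; exact hw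
    have hsupp' : (((x : A) - (y : A)).coeff.support : Set (FreeMagma E)) ⊆ outTermSet I :=
      (Finsupp.mem_supported ℚ _).mp hsub'
    have : (x : A) - (y : A) = 0 := by
      by_contra hne
      have hzT : maxTerm _ hne ∈ maxTermSet I := ⟨_, hne, hmem', rfl⟩
      exact (hsupp' (Finset.mem_coe.mpr (hmem _ hne))) hzT
    exact Subtype.ext (sub_eq_zero.mp this)
  · -- surjectivity
    intro q
    obtain ⟨a, rfl⟩ := Submodule.mkQ_surjective I q
    have : a ∈ K := htop ▸ Submodule.mem_top
    obtain ⟨s, hs, i, hi, hsi⟩ := Submodule.mem_sup.mp this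
    refine ⟨⟨s, hs⟩, ?_⟩
    simp only [LinearMap.coe_comp, Function.comp_apply, Submodule.coe_subtype]
    have h0 : I.mkQ i = 0 := (Submodule.Quotient.mk_eq_zero I).mpr hi
    rw [← hsi, map_add, h0, add_zero]
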